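/- Assume 2·P1 < γ2. Then R2(qA(1), 1) > R2(qA(0), 0) if and only if a12 > (P1 − γ1)² / [(γ2 − γ1)·(√(γ2 − 2·P1) − γ1)²], where qA(1) = (1/a12)·[γ2 − P1 − √((γ2+1)·(γ2 − 2·P1))] and qA(0) = (1/a12)·(P1/γ1 − 1). -/

import Mathlib

set_option maxHeartbeats 1600000 in
/-- Assume `2·P1 < γ2`. Then `R2(qA(1), 1) > R2(qA(0), 0)` iff
`a12 > (P1 − γ1)² / [(γ2 − γ1)·(√(γ2 − 2·P1) − γ1)²]`, where
`qA(1) = (1/a12)·(γ2 − P1 − √((γ2+1)·(γ2 − 2·P1)))` and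
`qA(0) = (1/a12)·(P1/γ1 − 1)`. -/
theorem stmt11 (P1 P2 a12 α Rbar γ1 γ2 : ℝ)
    (hP1 : 0 < P1) (hP2 : 0 < P2) (ha12 : 0 < a12) (hα : α ∈ Set.Ioo (0:ℝ) 1)
    (hRbar : Rbar = α * Real.logb 2 (1 + P1))
    (hγ1 : γ1 = (1 + P1) ^ α - 1) (hγ2 : γ2 = (1 + P1) ^ (2 * α) - 1)
    (h2P1 : 2 * P1 < γ2)
    (R2 : ℝ → ℝ → ℝ)
    (hR2 : ∀ p κ, R2 p κ = (1 / 2) * Real.logb 2 (1 + p * (p * (1 - κ ^ 2) + 2)))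
    (qA : ℝ → ℝ)
    (hqA : ∀ κ, qA κ = ((P1 - γ2)
        + Real.sqrt ((γ2 + 1) * (P1 ^ 2 * (1 - κ ^ 2) + (γ2 - 2 * P1) * κ ^ 2)))
        / (a12 * ((γ2 + 1) * (1 - κ ^ 2) - 1))) :
    qA 1 = (1 / a12) * (γ2 - P1 - Real.sqrt ((γ2 + 1) * (γ2 - 2 * P1)))
    ∧ qA 0 = (1 / a12) * (P1 / γ1 - 1)
    ∧ (R2 (qA 1) 1 > R2 (qA 0) 0
        ↔ a12 > (P1 - γ1) ^ 2
            / ((γ2 - γ1) * (Real.sqrt (γ2 - 2 * P1) - γ1) ^ 2)) := by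
  obtain ⟨hα0, hα1⟩ := hα
  have hb : (1:ℝ) < 1 + P1 := by linarith
  have hbpos : (0:ℝ) < 1 + P1 := by linarith
  -- basic facts about γ1
  have hγ1pos : 0 < γ1 := by
    rw [hγ1]
    have : (1:ℝ) < (1 + P1) ^ α := by
      rw [Real.one_lt_rpow_iff_of_pos hbpos]
      exact Or.inl ⟨hb, hα0⟩
    linarith
  have hγ1P1 : γ1 < P1 := by
    rw [hγ1]
    have : (1 + P1) ^ α < (1 + P1) ^ (1:ℝ) := by
      rw [Real.rpow_lt_rpow_left_iff hb]; exact hα1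
    rw [Real.rpow_one] at this
    linarith
  have hγ2eq : γ2 = γ1 ^ 2 + 2 * γ1 := by
    rw [hγ2, hγ1]
    have h2 : (1 + P1) ^ (2 * α) = ((1 + P1) ^ α) ^ (2:ℕ) := by
      rw [mul_comm, Real.rpow_mul hbpos.le, ← Real.rpow_natCast ((1 + P1) ^ α) 2]
      norm_num
    rw [h2]; ring
  -- t = sqrt(γ2 - 2 P1)
  set t : ℝ := Real.sqrt (γ2 - 2 * P1) with htdef
  have ht0 : 0 ≤ t := Real.sqrt_nonneg _
  have ht2 : t ^ 2 = γ2 - 2 * P1 := Real.sq_sqrt (by linarith)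
  have htlt : t < γ1 := by
    rw [htdef, Real.sqrt_lt' hγ1pos]
    nlinarith
  -- sqrt((γ2+1)(γ2-2P1)) = (γ1+1) * t
  have hS : Real.sqrt ((γ2 + 1) * (γ2 - 2 * P1)) = (γ1 + 1) * t := by
    rw [Real.sqrt_mul (by nlinarith) ]
    congr 1
    rw [show γ2 + 1 = (γ1 + 1) ^ 2 by nlinarith]
    exact Real.sqrt_sq (by linarith)
  -- closed forms for qA 1 and qA 0
  have hq1 : qA 1 = (1 / a12) * (γ2 - P1 - Real.sqrt ((γ2 + 1) * (γ2 - 2 * P1))) := by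
    rw [hqA]
    rw [show P1 ^ 2 * (1 - (1:ℝ) ^ 2) + (γ2 - 2 * P1) * (1:ℝ) ^ 2 = γ2 - 2 * P1 by ring,
        show (γ2 + 1) * (1 - (1:ℝ) ^ 2) - 1 = -1 by ring]
    rw [div_eq_iff (mul_ne_zero ha12.ne' (by norm_num : (-1:ℝ) ≠ 0))]
    field_simp
    ring
  have hq0 : qA 0 = (1 / a12) * (P1 / γ1 - 1) := by
    rw [hqA]
    rw [show P1 ^ 2 * (1 - (0:ℝ) ^ 2) + (γ2 - 2 * P1) * (0:ℝ) ^ 2 = (P1) ^ 2 by ring,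
        show (γ2 + 1) * (1 - (0:ℝ) ^ 2) - 1 = γ2 by ring]
    have : Real.sqrt ((γ2 + 1) * P1 ^ 2) = (γ1 + 1) * P1 := by
      rw [Real.sqrt_mul (by nlinarith), Real.sqrt_sq hP1.le]
      congr 1
      rw [show γ2 + 1 = (γ1 + 1) ^ 2 by nlinarith]
      exact Real.sqrt_sq (by linarith)
    rw [this]
    have hγ2pos : 0 < γ2 := by linarith
    field_simp
    linear_combination (-P1) * hγ2eq
  refine ⟨hq1, hq0, ?_⟩
  -- positivity of the two powers
  have hq0pos : 0 < qA 0 := by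
    rw [hq0]
    have : 0 < P1 / γ1 - 1 := by
      rw [sub_pos, lt_div_iff₀ hγ1pos]; linarith
    positivity
  have hN1pos : 0 < γ2 - P1 - (γ1 + 1) * t := by
    have hlt : γ2 < P1 ^ 2 + 2 * P1 := by nlinarith
    have h1 : ((γ1 + 1) * t) ^ 2 = (γ2 + 1) * (γ2 - 2 * P1) := by
      rw [mul_pow, ht2]; linear_combination (-(γ2 - 2 * P1)) * hγ2eq
    have h2 : 0 ≤ (γ1 + 1) * t := by positivity
    nlinarith [h1, h2, hlt]
  have hq1pos : 0 < qA 1 := by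
    rw [hq1, hS]
    positivity
  -- rewrite the rate inequality
  rw [hR2, hR2]
  have hA1 : 1 + qA 1 * (qA 1 * (1 - (1:ℝ) ^ 2) + 2) = 1 + 2 * qA 1 := by ring
  have hA0 : 1 + qA 0 * (qA 0 * (1 - (0:ℝ) ^ 2) + 2) = (1 + qA 0) ^ 2 := by ring
  rw [hA1, hA0]
  have hA1pos : 0 < 1 + 2 * qA 1 := by linarith
  have hA0pos : 0 < (1 + qA 0) ^ 2 := by positivity
  have hlog : (1/2 : ℝ) * Real.logb 2 (1 + 2 * qA 1) > (1/2 : ℝ) * Real.logb 2 ((1 + qA 0) ^ 2)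
      ↔ (1 + qA 0) ^ 2 < 1 + 2 * qA 1 := by
    constructor
    · intro h
      by_contra hc
      push_neg at hc
      have := Real.logb_le_logb_of_le (b := 2) (by norm_num) hA1pos hc
      linarith
    · intro h
      have := Real.logb_lt_logb (b := 2) (by norm_num) hA0pos h
      linarith
  rw [gt_iff_lt] at hlog ⊢
  rw [hlog]
  -- key relations
  have hq1' : a12 * qA 1 = γ2 - P1 - (γ1 + 1) * t := by
    rw [hq1, hS]; field_simp
  have hq0' : (a12 * γ1) * qA 0 = P1 - γ1 := by
    rw [hq0]; field_simp
  have hpoly : 2 * γ1 ^ 2 * (γ2 - P1 - (γ1 + 1) * t) - 2 * γ1 * (P1 - γ1)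
      = (γ2 - γ1) * (t - γ1) ^ 2 := by
    linear_combination (-(γ2 - γ1)) * ht2 + (2 * γ1 * t - γ2 + 2 * P1 - γ1) * hγ2eq
  have hD : 0 < (γ2 - γ1) * (t - γ1) ^ 2 := by nlinarith
  have hprod : 0 < a12 ^ 2 * γ1 ^ 2 := by positivity
  have hmain : a12 * ((γ2 - γ1) * (t - γ1) ^ 2) - (P1 - γ1) ^ 2
      = a12 ^ 2 * γ1 ^ 2 * ((1 + 2 * qA 1) - (1 + qA 0) ^ 2) := by
    linear_combination (-(2 * a12 * γ1 ^ 2)) * hq1'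
      + (2 * a12 * γ1 + a12 * γ1 * qA 0 + P1 - γ1) * hq0' - a12 * hpoly
  constructor
  · intro h
    rw [gt_iff_lt, div_lt_iff₀ hD]
    nlinarith [mul_pos hprod (show (0:ℝ) < (1 + 2 * qA 1) - (1 + qA 0) ^ 2 by linarith)]
  · intro h
    rw [gt_iff_lt, div_lt_iff₀ hD] at h
    by_contra hc
    push_neg at hc
    have h1 : (1 + 2 * qA 1) - (1 + qA 0) ^ 2 ≤ 0 := by linarith
    nlinarith [mul_nonpos_of_nonneg_of_nonpos hprod.le h1]
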